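/- For every χ > 0, φ(χ) − 2φ(0) + 2φ(0)Φ(χ) − χ(1 − Φ(χ)) < 0, where φ(0) = 1/√(2π). -/

import Mathlib

open MeasureTheory

/-- The standard normal probability density function. -/
noncomputable def stdGaussianPDF (x : ℝ) : ℝ :=
  Real.exp (-x ^ 2 / 2) / Real.sqrt (2 * Real.pi)

/-- The standard normal cumulative distribution function. -/
noncomputable def stdGaussianCDF (x : ℝ) : ℝ :=
  ∫ t in Set.Iic x, stdGaussianPDF t

open Real Set Filter

lemma pdf_eq (x : ℝ) : stdGaussianPDF x = Real.exp (-(1/2) * x ^ 2) * (Real.sqrt (2*Real.pi))⁻¹ := by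
  rw [stdGaussianPDF, div_eq_mul_inv]; ring_nf

lemma integrable_pdf : Integrable stdGaussianPDF := by
  simp only [funext pdf_eq]
  exact (integrable_exp_neg_mul_sq (by norm_num : (0:ℝ) < 1/2)).mul_const _

lemma integral_pdf : ∫ x, stdGaussianPDF x = 1 := by
  simp only [funext pdf_eq]
  rw [integral_mul_const, integral_gaussian]
  rw [← Real.sqrt_inv, ← Real.sqrt_mul (by positivity)]
  rw [Real.sqrt_eq_one]
  field_simp


noncomputable def Q (x : ℝ) : ℝ := ∫ t in Set.Ioi x, stdGaussianPDF t

lemma continuous_pdf : Continuous stdGaussianPDF := by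
  unfold stdGaussianPDF; fun_prop

lemma pdf_pos (x : ℝ) : 0 < stdGaussianPDF x := by
  unfold stdGaussianPDF
  have := Real.pi_pos
  positivity

lemma cdf_add_Q (x : ℝ) : stdGaussianCDF x + Q x = 1 := by
  rw [stdGaussianCDF, Q, intervalIntegral.integral_Iic_add_Ioi integrable_pdf.integrableOn
    integrable_pdf.integrableOn, integral_pdf]

lemma Q_pos (x : ℝ) : 0 < Q x := by
  rw [Q, setIntegral_pos_iff_support_of_nonneg_ae
    (Eventually.of_forall fun t => (pdf_pos t).le) integrable_pdf.integrableOn]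
  have : Function.support stdGaussianPDF = Set.univ := by
    ext t; simp [(pdf_pos t).ne']
  rw [this, Set.univ_inter]
  simp [Real.volume_Ioi]

lemma Q_nonneg (x : ℝ) : 0 ≤ Q x := (Q_pos x).le

lemma integrable_mul_pdf : Integrable (fun t => t * stdGaussianPDF t) := by
  simp only [funext pdf_eq, ← mul_assoc]
  exact (integrable_mul_exp_neg_mul_sq (by norm_num : (0:ℝ) < 1/2)).mul_const _

lemma pdf_hasDerivAt (x : ℝ) : HasDerivAt (fun t => -stdGaussianPDF t) (x * stdGaussianPDF x) x := by
  have h1 : HasDerivAt (fun t : ℝ => -t ^ 2 / 2) (-x) x := by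
    have := ((hasDerivAt_pow 2 x).neg).div_const 2
    simpa using this.congr_deriv (by ring)
  have h2 : HasDerivAt (fun t : ℝ => Real.exp (-t ^ 2 / 2)) (Real.exp (-x ^ 2 / 2) * (-x)) x :=
    (Real.hasDerivAt_exp _).comp x h1
  have h3 := (h2.div_const (Real.sqrt (2 * Real.pi))).neg
  have : -(Real.exp (-x ^ 2 / 2) * -x / Real.sqrt (2 * Real.pi)) = x * stdGaussianPDF x := by
    rw [stdGaussianPDF]; ring
  rw [this] at h3
  exact h3.congr_of_eventuallyEq (Eventually.of_forall fun t => rfl)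

lemma pdf_tendsto_zero : Tendsto stdGaussianPDF atTop (nhds 0) := by
  simp only [funext pdf_eq]
  rw [show (0:ℝ) = 0 * (Real.sqrt (2*Real.pi))⁻¹ by ring]
  refine Tendsto.mul_const _ ?_
  refine Real.tendsto_exp_atBot.comp ?_
  refine Tendsto.const_mul_atTop_of_neg (by norm_num) ?_
  exact tendsto_pow_atTop (by norm_num)

lemma integral_mul_pdf_Ioi (x : ℝ) :
    ∫ t in Set.Ioi x, t * stdGaussianPDF t = stdGaussianPDF x := by
  have h := integral_Ioi_of_hasDerivAt_of_tendsto
    (f := fun t => -stdGaussianPDF t) (f' := fun t => t * stdGaussianPDF t) (a := x) (m := 0)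
    (continuous_pdf.neg.continuousWithinAt)
    (fun t _ => pdf_hasDerivAt t)
    integrable_mul_pdf.integrableOn
    (by simpa using pdf_tendsto_zero.neg)
  simpa using h

lemma mills (x : ℝ) (hx : 0 < x) : x * Q x < stdGaussianPDF x := by
  have hint : ∫ t in Set.Ioi x, (t - x) * stdGaussianPDF t
      = stdGaussianPDF x - x * Q x := by
    have : ∀ t, (t - x) * stdGaussianPDF t
        = t * stdGaussianPDF t - x * stdGaussianPDF t := fun t => by ring
    simp only [this]
    rw [integral_sub (integrable_mul_pdf.integrableOn)
      ((integrable_pdf.integrableOn).const_mul x), integral_mul_pdf_Ioi,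
      MeasureTheory.integral_const_mul, Q]
  have hpos : 0 < ∫ t in Set.Ioi x, (t - x) * stdGaussianPDF t := by
    rw [setIntegral_pos_iff_support_of_nonneg_ae]
    · have hs : Set.Ioi x ⊆ Function.support (fun t => (t - x) * stdGaussianPDF t) ∩ Set.Ioi x := by
        intro t ht
        refine ⟨?_, ht⟩
        have : 0 < (t - x) * stdGaussianPDF t := mul_pos (by simpa using ht) (pdf_pos t)
        exact Function.mem_support.2 this.ne'
      calc (0:ENNReal) < volume (Set.Ioi x) := by simp [Real.volume_Ioi]
        _ ≤ _ := measure_mono hs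
    · rw [EventuallyLE, ae_restrict_iff' measurableSet_Ioi]
      exact Eventually.of_forall fun t ht =>
        mul_nonneg (by simpa using le_of_lt ht) (pdf_pos t).le
    · exact (integrable_mul_pdf.integrableOn.sub ((integrable_pdf.integrableOn).const_mul x)).congr
        (Eventually.of_forall fun t => by simp; ring)
  linarith [hint ▸ hpos]

lemma cdf_hasDerivAt (x : ℝ) : HasDerivAt stdGaussianCDF (stdGaussianPDF x) x := by
  have key : ∀ y, stdGaussianCDF y = stdGaussianCDF 0 + ∫ t in (0:ℝ)..y, stdGaussianPDF t := by
    intro y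
    rw [← intervalIntegral.integral_Iic_sub_Iic integrable_pdf.integrableOn
      integrable_pdf.integrableOn]
    unfold stdGaussianCDF; ring
  have h := (continuous_pdf.integral_hasStrictDerivAt 0 x).hasDerivAt.const_add (stdGaussianCDF 0)
  exact h.congr_of_eventuallyEq (Eventually.of_forall fun y => (key y))

lemma Q_eq (x : ℝ) : Q x = 1 - stdGaussianCDF x := by linarith [cdf_add_Q x]

lemma Q_hasDerivAt (x : ℝ) : HasDerivAt Q (-(stdGaussianPDF x)) x := by
  have h := ((cdf_hasDerivAt x).const_sub 1)
  exact h.congr_of_eventuallyEq (Eventually.of_forall fun y => (Q_eq y))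

lemma Q_tendsto_zero : Tendsto Q atTop (nhds 0) := by
  have h1 : ∀ᶠ x in atTop, Q x ≤ stdGaussianPDF x / x := by
    filter_upwards [eventually_gt_atTop 0] with x hx
    rw [le_div_iff₀ hx]
    linarith [mills x hx, mul_comm x (Q x)]
  have h2 : Tendsto (fun x => stdGaussianPDF x / x) atTop (nhds 0) := by
    simpa using pdf_tendsto_zero.div_atTop tendsto_id
  exact tendsto_of_tendsto_of_tendsto_of_le_of_le' tendsto_const_nhds h2
    (Eventually.of_forall fun x => Q_nonneg x) h1

noncomputable def cc : ℝ := (Real.sqrt (2 * Real.pi))⁻¹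

lemma cc_pos : 0 < cc := by
  rw [cc]
  have := Real.pi_pos
  positivity

lemma pdf_zero : stdGaussianPDF 0 = cc := by
  simp [stdGaussianPDF, cc, div_eq_mul_inv]

lemma pdf_eq' (x : ℝ) : stdGaussianPDF x = Real.exp (-(x^2)/2) * cc := by
  rw [stdGaussianPDF, cc, div_eq_mul_inv]

lemma Q_zero : Q 0 = 1/2 := by
  rw [Q]
  simp only [funext pdf_eq]
  rw [MeasureTheory.integral_mul_const, integral_gaussian_Ioi]
  rw [div_mul_eq_mul_div, ← Real.sqrt_inv, ← Real.sqrt_mul (by positivity)]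
  rw [show Real.pi / (1/2) * (2*Real.pi)⁻¹ = 1 by field_simp, Real.sqrt_one]

noncomputable def hfun (x : ℝ) : ℝ := (2 * cc + x) * Q x - stdGaussianPDF x

lemma hfun_zero : hfun 0 = 0 := by
  rw [hfun, Q_zero, pdf_zero]; ring

lemma pdf_hasDerivAt' (x : ℝ) : HasDerivAt stdGaussianPDF (-(x * stdGaussianPDF x)) x := by
  have := (pdf_hasDerivAt x).neg
  exact this.congr_of_eventuallyEq (Eventually.of_forall fun t => by simp)

lemma hfun_hasDerivAt (x : ℝ) :
    HasDerivAt hfun (Q x - 2 * cc * stdGaussianPDF x) x := by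
  have h1 : HasDerivAt (fun t : ℝ => 2 * cc + t) 1 x := (hasDerivAt_id x).const_add _
  have h2 := h1.mul (Q_hasDerivAt x)
  have h3 := h2.sub (pdf_hasDerivAt' x)
  have : 1 * Q x + (2 * cc + x) * -stdGaussianPDF x - -(x * stdGaussianPDF x)
      = Q x - 2 * cc * stdGaussianPDF x := by ring
  rw [this] at h3
  exact h3.congr_of_eventuallyEq (Eventually.of_forall fun t => by rw [hfun]; rfl)

noncomputable def rfun (x : ℝ) : ℝ := Q x * Real.exp (x^2/2)

lemma rfun_hasDerivAt (x : ℝ) :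
    HasDerivAt rfun ((x * Q x - stdGaussianPDF x) * Real.exp (x^2/2)) x := by
  have hE : HasDerivAt (fun t : ℝ => Real.exp (t^2/2)) (Real.exp (x^2/2) * x) x := by
    have h1 : HasDerivAt (fun t : ℝ => t ^ 2 / 2) x x := by
      simpa using (hasDerivAt_pow 2 x).div_const 2
    exact (Real.hasDerivAt_exp _).comp x h1
  have := (Q_hasDerivAt x).mul hE
  have heq : -stdGaussianPDF x * Real.exp (x^2/2) + Q x * (Real.exp (x^2/2) * x)
      = (x * Q x - stdGaussianPDF x) * Real.exp (x^2/2) := by ring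
  rw [heq] at this
  exact this

lemma rfun_strictAntiOn : StrictAntiOn rfun (Set.Ici 0) := by
  refine strictAntiOn_of_deriv_neg (convex_Ici 0)
    (fun x _ => (rfun_hasDerivAt x).continuousAt.continuousWithinAt) ?_
  intro x hx
  rw [interior_Ici] at hx
  rw [(rfun_hasDerivAt x).deriv]
  have hm := mills x hx
  have : x * Q x - stdGaussianPDF x < 0 := by linarith
  exact mul_neg_of_neg_of_pos this (Real.exp_pos _)

lemma Q_eq_rfun (x : ℝ) : Q x = rfun x * Real.exp (-(x^2)/2) := by
  rw [rfun, mul_assoc, ← Real.exp_add]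
  rw [show x^2/2 + -(x^2)/2 = 0 by ring, Real.exp_zero, mul_one]

lemma hfun_deriv_sign (x : ℝ) :
    Q x - 2 * cc * stdGaussianPDF x = (rfun x - 2 * cc^2) * Real.exp (-(x^2)/2) := by
  rw [Q_eq_rfun, pdf_eq']; ring

lemma hfun_tendsto : Tendsto hfun atTop (nhds 0) := by
  have hxQ : Tendsto (fun x => x * Q x) atTop (nhds 0) := by
    refine tendsto_of_tendsto_of_tendsto_of_le_of_le' tendsto_const_nhds pdf_tendsto_zero ?_ ?_
    · filter_upwards [eventually_ge_atTop 0] with x hx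
      exact mul_nonneg hx (Q_nonneg x)
    · filter_upwards [eventually_gt_atTop 0] with x hx
      exact (mills x hx).le
  have h2 : Tendsto (fun x => 2 * cc * Q x) atTop (nhds 0) := by
    simpa using Q_tendsto_zero.const_mul (2 * cc)
  have := (h2.add hxQ).sub pdf_tendsto_zero
  simp only [add_zero, sub_zero, zero_add, zero_sub, neg_zero] at this
  refine this.congr fun x => ?_
  rw [hfun]; ring

lemma hfun_pos (χ : ℝ) (hχ : 0 < χ) : 0 < hfun χ := by
  rcases le_or_gt (2 * cc ^ 2) (rfun χ) with hc | hc
  · have hmono : StrictMonoOn hfun (Set.Icc 0 χ) := by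
      refine strictMonoOn_of_deriv_pos (convex_Icc 0 χ)
        (fun t _ => (hfun_hasDerivAt t).continuousAt.continuousWithinAt) ?_
      intro t ht
      rw [interior_Icc] at ht
      rw [(hfun_hasDerivAt t).deriv, hfun_deriv_sign]
      have hr : rfun χ < rfun t := rfun_strictAntiOn ht.1.le (le_trans ht.1.le ht.2.le) ht.2
      exact mul_pos (by linarith) (Real.exp_pos _)
    have := hmono (Set.left_mem_Icc.2 hχ.le) (Set.right_mem_Icc.2 hχ.le) hχ
    rwa [hfun_zero] at this
  · have hanti : StrictAntiOn hfun (Set.Ici χ) := by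
      refine strictAntiOn_of_deriv_neg (convex_Ici χ)
        (fun t _ => (hfun_hasDerivAt t).continuousAt.continuousWithinAt) ?_
      intro t ht
      rw [interior_Ici] at ht
      rw [(hfun_hasDerivAt t).deriv, hfun_deriv_sign]
      have hr : rfun t < rfun χ := rfun_strictAntiOn hχ.le (hχ.le.trans ht.le) ht
      exact mul_neg_of_neg_of_pos (by linarith) (Real.exp_pos _)
    have h1 : hfun (χ + 1) < hfun χ :=
      hanti Set.self_mem_Ici (by simp [le_add_of_nonneg_right] : χ + 1 ∈ Set.Ici χ)
        (lt_add_one χ)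
    have h2 : 0 ≤ hfun (χ + 1) := by
      refine le_of_tendsto hfun_tendsto ?_
      filter_upwards [eventually_ge_atTop (χ + 1)] with t ht
      exact hanti.antitoneOn (by simp : χ + 1 ∈ Set.Ici χ) (by simp; linarith) ht
    linarith

/-- For every `χ > 0`,
`φ(χ) − 2φ(0) + 2φ(0)Φ(χ) − χ(1 − Φ(χ)) < 0`, where `φ(0) = 1/√(2π)`. -/
theorem g2_HT_neg (χ : ℝ) (hχ : 0 < χ) :
    stdGaussianPDF χ - 2 * (1 / Real.sqrt (2 * Real.pi)) +
        2 * (1 / Real.sqrt (2 * Real.pi)) * stdGaussianCDF χ -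
      χ * (1 - stdGaussianCDF χ) < 0 := by
  have hp := hfun_pos χ hχ
  rw [hfun] at hp
  have hQ : Q χ = 1 - stdGaussianCDF χ := Q_eq χ
  have hc : (1:ℝ) / Real.sqrt (2 * Real.pi) = cc := by rw [cc, one_div]
  rw [hc, show stdGaussianCDF χ = 1 - Q χ by linarith]
  nlinarith [hp]
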